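/- Let 0 → V⁰ → V¹ → ... → V^r → 0 be an acyclic complex of finite-dimensional real vector spaces with differential D, and for each i let 𝔟^i be a basis of V^i. For each i choose a basis 𝔠^i of D(V^{i-1}) ⊆ V^i and a linearly independent family 𝔠̃^{i-1} in V^{i-1} with D(𝔠̃^{i-1}) = 𝔠^i. Then (𝔠^i, 𝔠̃^i) is a basis of V^i, and the quantity det(V•, D, 𝔟•) := ∏_i |[𝔟^i / (𝔠^i, 𝔠̃^i)]|^{(-1)^i} is independent of the choices of 𝔠^i and 𝔠̃^i. -/

import Mathlib

/-!
Statement 3: for an acyclic complex `0 → V⁰ → ⋯ → V^r → 0` of finite-dimensional real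
vector spaces with chosen bases `𝔟^i`, and choices `𝔠^i = D(𝔠̃^{i-1})` (a basis of
`D(V^{i-1})`) together with linearly independent lifts `𝔠̃^{i-1}`, the family
`(𝔠^i, 𝔠̃^i)` is a basis of `V^i`, and `∏_i |[𝔟^i/(𝔠^i, 𝔠̃^i)]|^{(-1)^i}` is
independent of the choices.
-/

/-- `|[𝔟/𝔞]|`: the absolute value of the determinant of the change-of-basis matrix
expressing the basis `b` in terms of the basis `a` (the index types may differ; the
absolute value does not depend on the identification chosen). -/
noncomputable def absDetChange {ι ι' V : Type*} [Fintype ι] [DecidableEq ι] [Fintype ι']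
    [AddCommGroup V] [Module ℝ V] (a : Module.Basis ι ℝ V) (b : Module.Basis ι' ℝ V) : ℝ :=
  letI := Classical.propDecidable
  if h : Nonempty (ι' ≃ ι) then |(a.toMatrix (b ∘ h.some.symm)).det| else 0

/-- Index type of the combined family `(𝔠^i, 𝔠̃^i)`, where `𝔠^i` is indexed by the
index type `κ (i-1)` of `𝔠̃^{i-1}` (empty contribution for `i = 0`). -/
def combIdx (κ : ℕ → Type*) : ℕ → Type _
  | 0 => PEmpty ⊕ κ 0
  | (i + 1) => κ i ⊕ κ (i + 1)

instance (κ : ℕ → Type*) [∀ i, Fintype (κ i)] (i : ℕ) : Fintype (combIdx κ i) := by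
  cases i with
  | zero => exact inferInstanceAs (Fintype (PEmpty ⊕ κ 0))
  | succ n => exact inferInstanceAs (Fintype (κ n ⊕ κ (n + 1)))

instance (κ : ℕ → Type*) [∀ i, DecidableEq (κ i)] (i : ℕ) : DecidableEq (combIdx κ i) := by
  cases i with
  | zero => exact inferInstanceAs (DecidableEq (PEmpty ⊕ κ 0))
  | succ n => exact inferInstanceAs (DecidableEq (κ n ⊕ κ (n + 1)))

lemma absDetChange_eq {ι ι' V : Type*} [Fintype ι] [DecidableEq ι] [Fintype ι']
    [AddCommGroup V] [Module ℝ V] (a : Module.Basis ι ℝ V) (b : Module.Basis ι' ℝ V) (e : ι' ≃ ι) :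
    absDetChange a b = |(a.toMatrix (b ∘ e.symm)).det| := by
  have hne : Nonempty (ι' ≃ ι) := ⟨e⟩
  have hgen : ∀ f : ι' ≃ ι, |(a.toMatrix (b ∘ f.symm)).det| = |(a.toMatrix (b ∘ e.symm)).det| := by
    intro f
    have hmat : a.toMatrix (b ∘ f.symm)
        = (a.toMatrix (b ∘ e.symm)).submatrix (Equiv.refl ι) (f.symm.trans e) := by
      ext x y
      simp [Module.Basis.toMatrix_apply, Matrix.submatrix_apply]
    rw [hmat]
    exact Matrix.abs_det_submatrix_equiv_equiv _ _ _
  have h0 : absDetChange a b = |(a.toMatrix (b ∘ hne.some.symm)).det| := by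
    rw [absDetChange]
    rw [dif_pos hne]
    convert rfl
  rw [h0]
  exact hgen _

lemma absDetChange_trans {ι ι' ι'' V : Type*} [Fintype ι] [DecidableEq ι]
    [Fintype ι'] [DecidableEq ι'] [Fintype ι'']
    [AddCommGroup V] [Module ℝ V]
    (a : Module.Basis ι ℝ V) (b : Module.Basis ι' ℝ V) (c : Module.Basis ι'' ℝ V)
    (e : ι' ≃ ι) (f : ι'' ≃ ι') :
    absDetChange a c = absDetChange a b * absDetChange b c := by
  rw [absDetChange_eq a b e, absDetChange_eq b c f, absDetChange_eq a c (f.trans e)]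
  have h1 : (b ∘ ⇑e.symm) = ⇑(b.reindex e) := by ext x; simp
  have key : a.toMatrix (c ∘ ⇑(f.trans e).symm)
      = a.toMatrix ⇑(b.reindex e) * (b.reindex e).toMatrix (c ∘ ⇑(f.trans e).symm) :=
    (Module.Basis.toMatrix_mul_toMatrix (b := a) (b' := b.reindex e) _).symm
  rw [key, Matrix.det_mul, abs_mul, h1]
  congr 1
  have h2 : (b.reindex e).toMatrix (c ∘ ⇑(f.trans e).symm)
      = (b.toMatrix (c ∘ ⇑f.symm)).submatrix e.symm e.symm := by
    ext x y
    simp [Module.Basis.toMatrix_apply, Matrix.submatrix_apply, Module.Basis.repr_reindex_apply]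
  rw [h2, Matrix.det_submatrix_equiv_self]

lemma absDetChange_ne_zero {ι ι' V : Type*} [Fintype ι] [DecidableEq ι] [Fintype ι']
    [AddCommGroup V] [Module ℝ V] (a : Module.Basis ι ℝ V) (b : Module.Basis ι' ℝ V) :
    absDetChange a b ≠ 0 := by
  have e : ι' ≃ ι := b.indexEquiv a
  rw [absDetChange_eq a b e]
  have h1 : (b ∘ ⇑e.symm) = ⇑(b.reindex e) := by ext x; simp
  rw [h1]
  have h2 : a.toMatrix ⇑(b.reindex e) * (b.reindex e).toMatrix ⇑a = 1 :=
    Module.Basis.toMatrix_mul_toMatrix_flip _ _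
  have := congrArg Matrix.det h2
  rw [Matrix.det_mul, Matrix.det_one] at this
  intro h
  rw [abs_eq_zero] at h
  rw [h, zero_mul] at this
  exact zero_ne_one this

lemma exists_basis_sum {V W : Type*} [AddCommGroup V] [Module ℝ V]
    [AddCommGroup W] [Module ℝ W] {α β : Type*} [Fintype β]
    (f : V →ₗ[ℝ] W) (v : α → V) (u : β → V)
    (hv_li : LinearIndependent ℝ v)
    (hv_span : Submodule.span ℝ (Set.range v) = LinearMap.ker f)
    (hu_li : LinearIndependent ℝ (f ∘ u))
    (hu_span : Submodule.span ℝ (Set.range (f ∘ u)) = LinearMap.range f) :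
    ∃ B : Module.Basis (α ⊕ β) ℝ V, (∀ x, B (Sum.inl x) = v x) ∧ (∀ x, B (Sum.inr x) = u x) := by
  have hu_li' : LinearIndependent ℝ u := hu_li.of_comp f
  have hdisj : Disjoint (Submodule.span ℝ (Set.range v)) (Submodule.span ℝ (Set.range u)) := by
    rw [Submodule.disjoint_def]
    intro x hx1 hx2
    rw [hv_span, LinearMap.mem_ker] at hx1
    obtain ⟨c, hc⟩ := (Submodule.mem_span_range_iff_exists_fun ℝ).mp hx2
    have hc0 : ∀ i, c i = 0 := by
      apply Fintype.linearIndependent_iff.mp hu_li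
      have : f (∑ i, c i • u i) = 0 := by rw [hc, hx1]
      simpa [map_sum, map_smul] using this
    rw [← hc]
    simp [hc0]
  have hli : LinearIndependent ℝ (Sum.elim v u) := hv_li.sum_type hu_li' hdisj
  have hspan : ⊤ ≤ Submodule.span ℝ (Set.range (Sum.elim v u)) := by
    intro x _
    rw [Set.Sum.elim_range, Submodule.span_union]
    have hfx : f x ∈ Submodule.span ℝ (Set.range (f ∘ u)) := by
      rw [hu_span]; exact ⟨x, rfl⟩
    obtain ⟨c, hc⟩ := (Submodule.mem_span_range_iff_exists_fun ℝ).mp hfx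
    set s : V := ∑ i, c i • u i with hs
    have hfs : f s = f x := by
      rw [hs, map_sum]
      simpa using hc
    have hxs : x - s ∈ LinearMap.ker f := by
      rw [LinearMap.mem_ker, map_sub, hfs, sub_self]
    have h1 : x - s ∈ Submodule.span ℝ (Set.range v) := by rw [hv_span]; exact hxs
    have h2 : s ∈ Submodule.span ℝ (Set.range u) :=
      Submodule.sum_mem _ fun i _ => Submodule.smul_mem _ _ (Submodule.subset_span ⟨i, rfl⟩)
    have : x = (x - s) + s := by abel
    rw [this]
    exact Submodule.add_mem _ (Submodule.mem_sup_left h1) (Submodule.mem_sup_right h2)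
  refine ⟨Module.Basis.mk hli hspan, fun x => ?_, fun x => ?_⟩ <;> rw [Module.Basis.mk_apply] <;> rfl

lemma telescope_prod (p : ℕ → ℝ) (hp : ∀ i, p i ≠ 0) : ∀ n : ℕ,
    ∏ i ∈ Finset.range (n + 1), (p i * p (i + 1)) ^ ((-1 : ℤ) ^ i)
      = p 0 * p (n + 1) ^ ((-1 : ℤ) ^ n)
  | 0 => by simp
  | (n + 1) => by
    rw [Finset.prod_range_succ, telescope_prod p hp n, mul_zpow, ← mul_assoc]
    rw [mul_assoc (p 0), ← zpow_add₀ (hp (n + 1))]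
    have : (-1 : ℤ) ^ n + (-1 : ℤ) ^ (n + 1) = 0 := by ring
    rw [this, zpow_zero, mul_one]

def inrIdx (κ : ℕ → Type*) : ∀ i, κ i → combIdx κ i
  | 0 => Sum.inr
  | (_ + 1) => Sum.inr

theorem comb_is_basis_and_det_well_defined
    (r : ℕ) (V : ℕ → Type) [∀ i, AddCommGroup (V i)] [∀ i, Module ℝ (V i)]
    [∀ i, FiniteDimensional ℝ (V i)]
    (hVtriv : ∀ i, r < i → Subsingleton (V i))
    -- the differential and acyclicity of `0 → V⁰ → V¹ → ⋯`
    (D : ∀ i, V i →ₗ[ℝ] V (i + 1))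
    (hDD : ∀ i, (D (i + 1)).comp (D i) = 0)
    (hexact0 : LinearMap.ker (D 0) = ⊥)
    (hexact : ∀ i, LinearMap.ker (D (i + 1)) = LinearMap.range (D i))
    -- the given bases `𝔟^i`
    (ι : ℕ → Type) [∀ i, Fintype (ι i)] [∀ i, DecidableEq (ι i)]
    (b : ∀ i, Module.Basis (ι i) ℝ (V i))
    -- two systems of choices `𝔠̃` (with `𝔠^{i+1} = D(𝔠̃^i)`)
    (κ κ' : ℕ → Type) [∀ i, Fintype (κ i)] [∀ i, DecidableEq (κ i)]
    [∀ i, Fintype (κ' i)] [∀ i, DecidableEq (κ' i)]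
    (ct : ∀ i, κ i → V i) (ct' : ∀ i, κ' i → V i)
    (hct_li : ∀ i, LinearIndependent ℝ (ct i))
    (hct'_li : ∀ i, LinearIndependent ℝ (ct' i))
    (hc_basis : ∀ i, LinearIndependent ℝ (fun j => D i (ct i j)) ∧
      Submodule.span ℝ (Set.range fun j => D i (ct i j)) =
        (LinearMap.range (D i)).restrictScalars ℝ)
    (hc'_basis : ∀ i, LinearIndependent ℝ (fun j => D i (ct' i j)) ∧
      Submodule.span ℝ (Set.range fun j => D i (ct' i j)) =
        (LinearMap.range (D i)).restrictScalars ℝ) :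
    -- (a) the combined families `(𝔠^i, 𝔠̃^i)` are bases of the `V^i`
    ((∃ B0 : Module.Basis (combIdx κ 0) ℝ (V 0), ∀ j : κ 0, B0 (Sum.inr j) = ct 0 j) ∧
     (∀ i, ∃ B : Module.Basis (combIdx κ (i + 1)) ℝ (V (i + 1)),
        (∀ j : κ i, B (Sum.inl j) = D i (ct i j)) ∧
        (∀ j : κ (i + 1), B (Sum.inr j) = ct (i + 1) j)) ∧
     (∃ B0 : Module.Basis (combIdx κ' 0) ℝ (V 0), ∀ j : κ' 0, B0 (Sum.inr j) = ct' 0 j) ∧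
     (∀ i, ∃ B : Module.Basis (combIdx κ' (i + 1)) ℝ (V (i + 1)),
        (∀ j : κ' i, B (Sum.inl j) = D i (ct' i j)) ∧
        (∀ j : κ' (i + 1), B (Sum.inr j) = ct' (i + 1) j))) ∧
    -- (b) `det(V•, D, 𝔟•)` does not depend on the choice of `𝔠̃`
    (∀ (B : ∀ i, Module.Basis (combIdx κ i) ℝ (V i)) (B' : ∀ i, Module.Basis (combIdx κ' i) ℝ (V i)),
      (∀ j : κ 0, B 0 (Sum.inr j) = ct 0 j) →
      (∀ i (j : κ i), B (i + 1) (Sum.inl j) = D i (ct i j)) →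
      (∀ i (j : κ (i + 1)), B (i + 1) (Sum.inr j) = ct (i + 1) j) →
      (∀ j : κ' 0, B' 0 (Sum.inr j) = ct' 0 j) →
      (∀ i (j : κ' i), B' (i + 1) (Sum.inl j) = D i (ct' i j)) →
      (∀ i (j : κ' (i + 1)), B' (i + 1) (Sum.inr j) = ct' (i + 1) j) →
      ∏ i ∈ Finset.range (r + 1), absDetChange (B i) (b i) ^ ((-1 : ℤ) ^ i) =
      ∏ i ∈ Finset.range (r + 1), absDetChange (B' i) (b i) ^ ((-1 : ℤ) ^ i)) := by
  classical
  have hrestrict : ∀ i, (LinearMap.range (D i)).restrictScalars ℝ = LinearMap.range (D i) :=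
    fun i => Submodule.restrictScalars_self _
  constructor
  · refine ⟨?_, ?_, ?_, ?_⟩
    · obtain ⟨B, _, h2⟩ := exists_basis_sum (D 0) (fun x : PEmpty => x.elim) (ct 0)
        linearIndependent_empty_type
        (by rw [Set.range_eq_empty, Submodule.span_empty, hexact0])
        ((hc_basis 0).1)
        (((hc_basis 0).2).trans (hrestrict 0))
      exact ⟨B, h2⟩
    · intro i
      obtain ⟨B, h1, h2⟩ := exists_basis_sum (D (i+1)) (fun j => D i (ct i j)) (ct (i+1))
        ((hc_basis i).1)
        (((hc_basis i).2).trans ((hrestrict i).trans (hexact i).symm))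
        ((hc_basis (i+1)).1)
        (((hc_basis (i+1)).2).trans (hrestrict (i+1)))
      exact ⟨B, h1, h2⟩
    · obtain ⟨B, _, h2⟩ := exists_basis_sum (D 0) (fun x : PEmpty => x.elim) (ct' 0)
        linearIndependent_empty_type
        (by rw [Set.range_eq_empty, Submodule.span_empty, hexact0])
        ((hc'_basis 0).1)
        (((hc'_basis 0).2).trans (hrestrict 0))
      exact ⟨B, h2⟩
    · intro i
      obtain ⟨B, h1, h2⟩ := exists_basis_sum (D (i+1)) (fun j => D i (ct' i j)) (ct' (i+1))
        ((hc'_basis i).1)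
        (((hc'_basis i).2).trans ((hrestrict i).trans (hexact i).symm))
        ((hc'_basis (i+1)).1)
        (((hc'_basis (i+1)).2).trans (hrestrict (i+1)))
      exact ⟨B, h1, h2⟩
  · intro B B' hB0 hBl hBr hB'0 hB'l hB'r
    haveI hsub : Subsingleton (V (r+1)) := hVtriv (r+1) (Nat.lt_succ_self r)
    haveI hκr : IsEmpty (κ r) := by
      constructor
      intro j
      exact (hc_basis r).1.ne_zero j (Subsingleton.elim _ _)
    have hcard : ∀ i, Fintype.card (κ' i) = Fintype.card (κ i) := by
      intro i
      have h1 := finrank_span_eq_card (hc_basis i).1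
      have h2 := finrank_span_eq_card (hc'_basis i).1
      rw [(hc_basis i).2] at h1
      rw [(hc'_basis i).2] at h2
      rw [← h2, ← h1]
    have e : ∀ i, κ' i ≃ κ i := fun i => Fintype.equivOfCardEq (hcard i)
    -- key coordinate identities
    have key1 : ∀ (i : ℕ) (x : κ i) (v : V i),
        (B (i+1)).repr (D i v) (Sum.inl x) = (B i).repr v (inrIdx κ i x) := by
      intro i x v
      have hmaps : (Finsupp.lapply (Sum.inl x : combIdx κ (i+1))).comp
            (((B (i+1)).repr.toLinearMap).comp (D i))
          = (Finsupp.lapply (inrIdx κ i x)).comp ((B i).repr.toLinearMap) := by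
        apply Module.Basis.ext (B i)
        intro z
        cases i with
        | zero =>
          cases z with
          | inl w => exact w.elim
          | inr w =>
            show (B 1).repr (D 0 (B 0 (Sum.inr w))) (Sum.inl x)
                = (B 0).repr (B 0 (Sum.inr w)) (inrIdx κ 0 x)
            have hR : (B 0).repr (B 0 (Sum.inr w)) (inrIdx κ 0 x)
                = if w = x then 1 else 0 := by
              erw [Module.Basis.repr_self]
              show (Finsupp.single (Sum.inr w : combIdx κ 0) 1) (Sum.inr x) = _
              rw [Finsupp.single_apply]
              simp
            have hL : (B 1).repr (D 0 (B 0 (Sum.inr w))) (Sum.inl x)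
                = if w = x then 1 else 0 := by
              erw [hB0 w, ← hBl 0 w, Module.Basis.repr_self]
              show (Finsupp.single (Sum.inl w : combIdx κ 1) 1) (Sum.inl x) = _
              rw [Finsupp.single_apply]
              simp
            exact hL.trans hR.symm
        | succ j =>
          cases z with
          | inl w =>
            show (B (j+2)).repr (D (j+1) (B (j+1) (Sum.inl w))) (Sum.inl x)
                = (B (j+1)).repr (B (j+1) (Sum.inl w)) (inrIdx κ (j+1) x)
            have hR : (B (j+1)).repr (B (j+1) (Sum.inl w)) (inrIdx κ (j+1) x) = 0 := by
              erw [Module.Basis.repr_self]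
              show (Finsupp.single (Sum.inl w : combIdx κ (j+1)) 1) (Sum.inr x) = 0
              rw [Finsupp.single_apply]
              simp
            have hz : D (j+1) (B (j+1) (Sum.inl w)) = 0 := by
              rw [hBl j w]
              have := DFunLike.congr_fun (hDD j) (ct j w)
              simpa using this
            rw [hz, map_zero, hR]
            rfl
          | inr w =>
            show (B (j+2)).repr (D (j+1) (B (j+1) (Sum.inr w))) (Sum.inl x)
                = (B (j+1)).repr (B (j+1) (Sum.inr w)) (inrIdx κ (j+1) x)
            have hR : (B (j+1)).repr (B (j+1) (Sum.inr w)) (inrIdx κ (j+1) x)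
                = if w = x then 1 else 0 := by
              erw [Module.Basis.repr_self]
              show (Finsupp.single (Sum.inr w : combIdx κ (j+1)) 1) (Sum.inr x) = _
              rw [Finsupp.single_apply]
              simp
            have hL : (B (j+2)).repr (D (j+1) (B (j+1) (Sum.inr w))) (Sum.inl x)
                = if w = x then 1 else 0 := by
              erw [hBr j w, ← hBl (j+1) w, Module.Basis.repr_self]
              show (Finsupp.single (Sum.inl w : combIdx κ (j+2)) 1) (Sum.inl x) = _
              rw [Finsupp.single_apply]
              simp
            exact hL.trans hR.symm
      exact LinearMap.congr_fun hmaps v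
    have key2 : ∀ (i : ℕ) (x : κ (i+1)) (v : V i),
        (B (i+1)).repr (D i v) (Sum.inr x) = 0 := by
      intro i x v
      have hmaps : (Finsupp.lapply (Sum.inr x : combIdx κ (i+1))).comp
            (((B (i+1)).repr.toLinearMap).comp (D i)) = 0 := by
        apply Module.Basis.ext (B i)
        intro z
        cases i with
        | zero =>
          cases z with
          | inl w => exact w.elim
          | inr w =>
            show (B 1).repr (D 0 (B 0 (Sum.inr w))) (Sum.inr x) = 0
            erw [hB0 w, ← hBl 0 w, Module.Basis.repr_self]
            show (Finsupp.single (Sum.inl w : combIdx κ 1) 1) (Sum.inr x) = 0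
            rw [Finsupp.single_apply]
            simp
        | succ j =>
          cases z with
          | inl w =>
            show (B (j+2)).repr (D (j+1) (B (j+1) (Sum.inl w))) (Sum.inr x) = 0
            have hz : D (j+1) (B (j+1) (Sum.inl w)) = 0 := by
              rw [hBl j w]
              have := DFunLike.congr_fun (hDD j) (ct j w)
              simpa using this
            rw [hz, map_zero]
            rfl
          | inr w =>
            show (B (j+2)).repr (D (j+1) (B (j+1) (Sum.inr w))) (Sum.inr x) = 0
            erw [hBr j w, ← hBl (j+1) w, Module.Basis.repr_self]
            show (Finsupp.single (Sum.inl w : combIdx κ (j+2)) 1) (Sum.inr x) = 0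
            rw [Finsupp.single_apply]
            simp
      exact LinearMap.congr_fun hmaps v
    -- the square matrices M i and the telescoping sequence p
    set M : (i : ℕ) → Matrix (κ i) (κ i) ℝ :=
      fun i => Matrix.of fun x y => (B i).repr (ct' i ((e i).symm y)) (inrIdx κ i x) with hM
    set p : ℕ → ℝ :=
      fun i => Nat.casesOn i 1 (fun j => |(M j).det|) with hp
    have hp0 : p 0 = 1 := rfl
    have hpS : ∀ j, p (j+1) = |(M j).det| := fun _ => rfl
    have level : ∀ i, absDetChange (B i) (B' i) = p i * p (i+1) := by
      intro i
      cases i with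
      | zero =>
        set E : combIdx κ' 0 ≃ combIdx κ 0 :=
          Equiv.sumCongr (Equiv.refl PEmpty) (e 0) with hE
        have hEs : ∀ y : κ 0, E.symm (Sum.inr y) = Sum.inr ((e 0).symm y) := by
          intro y
          rw [hE]
          rfl
        rw [absDetChange_eq (B 0) (B' 0) E]
        set C := (B 0).toMatrix (⇑(B' 0) ∘ ⇑E.symm) with hC
        have hblock : C.toBlocks₂₁ = 0 := by
          ext x y
          exact y.elim
        have hC2 : C = Matrix.fromBlocks C.toBlocks₁₁ C.toBlocks₁₂ 0 C.toBlocks₂₂ := by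
          erw [← hblock, Matrix.fromBlocks_toBlocks]
        have h22 : C.toBlocks₂₂ = M 0 := by
          ext x y
          show C (Sum.inr x) (Sum.inr y) = _
          erw [hC, Module.Basis.toMatrix_apply, Function.comp_apply, hEs y, hB'0]
          rfl
        erw [hC2, Matrix.det_fromBlocks_zero₂₁, Matrix.det_isEmpty, one_mul, h22, hp0, one_mul]
      | succ i =>
        set E : combIdx κ' (i+1) ≃ combIdx κ (i+1) :=
          Equiv.sumCongr (e i) (e (i+1)) with hE
        have hEl : ∀ y : κ i, E.symm (Sum.inl y) = Sum.inl ((e i).symm y) := by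
          intro y
          rw [hE]
          rfl
        have hEr : ∀ y : κ (i+1), E.symm (Sum.inr y) = Sum.inr ((e (i+1)).symm y) := by
          intro y
          rw [hE]
          rfl
        rw [absDetChange_eq (B (i+1)) (B' (i+1)) E]
        set C := (B (i+1)).toMatrix (⇑(B' (i+1)) ∘ ⇑E.symm) with hC
        have hent : ∀ (z : combIdx κ (i+1)) (y : κ i),
            C z (Sum.inl y) = (B (i+1)).repr (D i (ct' i ((e i).symm y))) z := by
          intro z y
          erw [hC, Module.Basis.toMatrix_apply, Function.comp_apply, hEl y, hB'l]
        have hblock : C.toBlocks₂₁ = 0 := by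
          ext x y
          show C (Sum.inr x) (Sum.inl y) = 0
          erw [hent]
          exact key2 i x _
        have hC2 : C = Matrix.fromBlocks C.toBlocks₁₁ C.toBlocks₁₂ 0 C.toBlocks₂₂ := by
          erw [← hblock, Matrix.fromBlocks_toBlocks]
        have h11 : C.toBlocks₁₁ = M i := by
          ext x y
          show C (Sum.inl x) (Sum.inl y) = _
          erw [hent]
          exact key1 i x _
        have h22 : C.toBlocks₂₂ = M (i+1) := by
          ext x y
          show C (Sum.inr x) (Sum.inr y) = _
          erw [hC, Module.Basis.toMatrix_apply, Function.comp_apply, hEr y, hB'r]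
          rfl
        erw [hC2, Matrix.det_fromBlocks_zero₂₁, abs_mul, h11, h22, hpS i, hpS (i+1)]
    have hpne : ∀ i, p i ≠ 0 := by
      intro i
      induction i with
      | zero => rw [hp0]; exact one_ne_zero
      | succ j ih =>
        have hne := absDetChange_ne_zero (B j) (B' j)
        rw [level j] at hne
        exact right_ne_zero_of_mul hne
    have hplast : p (r+1) = 1 := by
      rw [hpS r, Matrix.det_isEmpty, abs_one]
    have hsplit : ∀ i, absDetChange (B i) (b i)
        = absDetChange (B i) (B' i) * absDetChange (B' i) (b i) := fun i =>
      absDetChange_trans (B i) (B' i) (b i) ((B' i).indexEquiv (B i)) ((b i).indexEquiv (B' i))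
    calc ∏ i ∈ Finset.range (r+1), absDetChange (B i) (b i) ^ ((-1:ℤ)^i)
        = ∏ i ∈ Finset.range (r+1),
            ((p i * p (i+1)) ^ ((-1:ℤ)^i) * absDetChange (B' i) (b i) ^ ((-1:ℤ)^i)) := by
          refine Finset.prod_congr rfl fun i _ => ?_
          rw [hsplit i, level i, mul_zpow]
      _ = (∏ i ∈ Finset.range (r+1), (p i * p (i+1)) ^ ((-1:ℤ)^i))
            * ∏ i ∈ Finset.range (r+1), absDetChange (B' i) (b i) ^ ((-1:ℤ)^i) :=
          Finset.prod_mul_distrib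
      _ = ∏ i ∈ Finset.range (r+1), absDetChange (B' i) (b i) ^ ((-1:ℤ)^i) := by
          rw [telescope_prod p hpne r, hp0, hplast, one_mul, one_zpow, one_mul]
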